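/- Let G be a group acting on P^{n-1}(F) as PGL_n(F) (n ≥ 3), and let ℓ₁ ≠ ℓ₂ be two distinct points. Then the stabilizer of the pair (ℓ₁, ℓ₂) has exactly 4 orbits on P^{n-1}(F): {ℓ₁}, {ℓ₂}, the set of points on the line through ℓ₁ and ℓ₂ other than ℓ₁, ℓ₂, and the complement of that line. -/

import Mathlib

open scoped LinearAlgebra.Projectivization
open Submodule FiniteDimensional

lemma exists_linearEquiv_of_li {F V : Type*} [Field F] [AddCommGroup V] [Module F V]
    [FiniteDimensional F V] {ι : Type*} [Fintype ι] {w w' : ι → V}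
    (hw : LinearIndependent F w) (hw' : LinearIndependent F w') :
    ∃ g : V ≃ₗ[F] V, ∀ i, g (w i) = w' i := by
  classical
  set p := span F (Set.range w) with hp
  set p' := span F (Set.range w') with hp'
  obtain ⟨q, hq⟩ := Submodule.exists_isCompl p
  obtain ⟨q', hq'⟩ := Submodule.exists_isCompl p'
  have hfr : Module.finrank F q = Module.finrank F q' := by
    have h1 := Submodule.finrank_add_eq_of_isCompl hq
    have h2 := Submodule.finrank_add_eq_of_isCompl hq'
    have e1 : Module.finrank F p = Fintype.card ι := finrank_span_eq_card hw
    have e2 : Module.finrank F p' = Fintype.card ι := finrank_span_eq_card hw'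
    omega
  obtain ⟨e⟩ := nonempty_linearEquiv_of_finrank_eq hfr
  let B : Module.Basis ι F p := Module.Basis.span hw
  let B' : Module.Basis ι F p' := Module.Basis.span hw'
  let eb : p ≃ₗ[F] p' := B.equiv B' (Equiv.refl ι)
  let g : V ≃ₗ[F] V :=
    (Submodule.prodEquivOfIsCompl p q hq).symm.trans
      ((eb.prodCongr e).trans (Submodule.prodEquivOfIsCompl p' q' hq'))
  refine ⟨g, fun i => ?_⟩
  have hmem : w i ∈ p := subset_span (Set.mem_range_self i)
  have hdec : (Submodule.prodEquivOfIsCompl p q hq).symm (w i) = (⟨w i, hmem⟩, 0) := by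
    rw [LinearEquiv.symm_apply_eq]
    simp [Submodule.coe_prodEquivOfIsCompl]
  show (Submodule.prodEquivOfIsCompl p' q' hq') ((eb.prodCongr e) ((Submodule.prodEquivOfIsCompl p q hq).symm (w i))) = w' i
  rw [hdec]
  have hB : (⟨w i, hmem⟩ : p) = B i := by
    ext; exact congrArg Subtype.val (Module.Basis.span_apply hw i).symm
  have heb : eb (⟨w i, hmem⟩) = B' i := by
    rw [hB]; simp [eb, Module.Basis.equiv_apply]
  simp only [LinearEquiv.prodCongr_apply, heb, map_zero]
  simp [Submodule.coe_prodEquivOfIsCompl]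
  exact congrArg Subtype.val (Module.Basis.span_apply hw' i)

lemma li_smul_pair {F V : Type*} [Field F] [AddCommGroup V] [Module F V]
    {x y : V} (h : LinearIndependent F ![x, y]) {a b : F} (ha : a ≠ 0) (hb : b ≠ 0) :
    LinearIndependent F ![a • x, b • y] := by
  have := h.units_smul ![Units.mk0 a ha, Units.mk0 b hb]
  convert this using 1
  ext i
  fin_cases i <;> simp

/-- For `n ≥ 3`, the stabilizer in `PGL_n(F)` of two distinct points
`ℓ₁ ≠ ℓ₂` of `P^{n-1}(F)` has exactly 4 orbits: `{ℓ₁}`, `{ℓ₂}`, the remaining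
points of the line through `ℓ₁` and `ℓ₂`, and the complement of that line. -/
theorem stmt_14 {F : Type*} [Field F] [Infinite F] (n : ℕ) (hn : 3 ≤ n)
    (ℓ₁ ℓ₂ : ℙ F (Fin n → F)) (h12 : ℓ₁ ≠ ℓ₂)
    (pmap : ((Fin n → F) ≃ₗ[F] (Fin n → F)) → ℙ F (Fin n → F) → ℙ F (Fin n → F))
    (hpmap : ∀ g, pmap g =
      Projectivization.map (g : (Fin n → F) →ₗ[F] (Fin n → F)) g.injective)
    (S : ((Fin n → F) ≃ₗ[F] (Fin n → F)) → Prop)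
    (hS : ∀ g, S g ↔ pmap g ℓ₁ = ℓ₁ ∧ pmap g ℓ₂ = ℓ₂)
    (L : Set (ℙ F (Fin n → F)))
    (hL : L = {w | w.submodule ≤ ℓ₁.submodule ⊔ ℓ₂.submodule})
    (orbit : ℙ F (Fin n → F) → Set (ℙ F (Fin n → F)))
    (horbit : ∀ w, orbit w = {z | ∃ g, S g ∧ pmap g w = z}) :
    orbit ℓ₁ = {ℓ₁} ∧ orbit ℓ₂ = {ℓ₂} ∧
    (∀ w ∈ L \ {ℓ₁, ℓ₂}, orbit w = L \ {ℓ₁, ℓ₂}) ∧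
    (∀ w ∉ L, orbit w = Lᶜ) := by
  classical
  obtain ⟨v₁, hv₁, h₁⟩ : ∃ v h, Projectivization.mk F v h = ℓ₁ :=
    ⟨ℓ₁.rep, ℓ₁.rep_nonzero, ℓ₁.mk_rep⟩
  obtain ⟨v₂, hv₂, h₂⟩ : ∃ v h, Projectivization.mk F v h = ℓ₂ :=
    ⟨ℓ₂.rep, ℓ₂.rep_nonzero, ℓ₂.mk_rep⟩
  subst h₁ h₂
  set P : Submodule F (Fin n → F) := Submodule.span F {v₁, v₂} with hPdef
  -- pmap acts on mk
  have hpm : ∀ (g : (Fin n → F) ≃ₗ[F] (Fin n → F)) (v : Fin n → F) (hv : v ≠ 0),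
      pmap g (Projectivization.mk F v hv) =
        Projectivization.mk F (g v) (by simpa using hv) := by
    intro g v hv
    rw [hpmap]
    exact Projectivization.map_mk _ _ v hv
  -- linear independence of the two representatives
  have hli : LinearIndependent F ![v₁, v₂] := by
    rw [LinearIndependent.pair_iff' hv₁]
    intro a ha
    exact h12 ((Projectivization.mk_eq_mk_iff' F v₂ v₁ hv₂ hv₁).2 ⟨a, ha⟩).symm
  -- the line as a span
  have hsub : (F ∙ v₁) ⊔ (F ∙ v₂) = P := by
    rw [hPdef, ← Submodule.span_union, Set.singleton_union]
  have hmemL : ∀ (v : Fin n → F) (hv : v ≠ 0), (Projectivization.mk F v hv ∈ L ↔ v ∈ P) := by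
    intro v hv
    rw [hL]
    simp only [Set.mem_setOf_eq, Projectivization.submodule_mk]
    rw [hsub]
    exact Submodule.span_singleton_le_iff_mem v P
  -- characterization of the stabilizer
  have hstab : ∀ g, S g ↔
      ((∃ a : Fˣ, a • v₁ = g v₁) ∧ (∃ b : Fˣ, b • v₂ = g v₂)) := by
    intro g
    rw [hS, hpm g v₁ hv₁, hpm g v₂ hv₂, Projectivization.mk_eq_mk_iff,
      Projectivization.mk_eq_mk_iff]
  -- the identity is in the stabilizer
  have hid : S (LinearEquiv.refl F (Fin n → F)) := by
    rw [hstab]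
    exact ⟨⟨1, by simp⟩, ⟨1, by simp⟩⟩
  -- pmap g is injective
  have hinj : ∀ g, Function.Injective (pmap g) := by
    intro g
    rw [hpmap]
    exact Projectivization.map_injective _ g.injective
  -- stabilizer elements preserve P
  have hPinv : ∀ g, S g → ∀ x : Fin n → F, (g x ∈ P ↔ x ∈ P) := by
    intro g hg x
    obtain ⟨⟨a, ha⟩, ⟨b, hb⟩⟩ := (hstab g).1 hg
    have hmap : Submodule.map (g : (Fin n → F) →ₗ[F] (Fin n → F)) P = P := by
      rw [hPdef, Submodule.map_span, Set.image_insert_eq, Set.image_singleton]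
      simp only [LinearEquiv.coe_coe]
      rw [← ha, ← hb]
      simp only [Units.smul_def]
      rw [Submodule.span_insert,
        Submodule.span_singleton_smul_eq a.isUnit,
        Submodule.span_singleton_smul_eq b.isUnit, ← Submodule.span_insert]
    constructor
    · intro hx
      rw [← hmap] at hx
      obtain ⟨y, hy, hyx⟩ := hx
      have : y = x := g.injective hyx
      rwa [← this]
    · intro hx
      have : (g : (Fin n → F) →ₗ[F] (Fin n → F)) x ∈
          Submodule.map (g : (Fin n → F) →ₗ[F] (Fin n → F)) P :=
        Submodule.mem_map_of_mem hx
      rwa [hmap] at this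
  -- stabilizer elements fix ℓ₁ and ℓ₂ pointwise, so preserve being ≠ ℓᵢ
  have hne : ∀ g, S g → ∀ (u : Fin n → F) (hu : u ≠ 0) (i : Fin 2),
      pmap g (Projectivization.mk F u hu) = ![Projectivization.mk F v₁ hv₁,
        Projectivization.mk F v₂ hv₂] i →
      Projectivization.mk F u hu = ![Projectivization.mk F v₁ hv₁,
        Projectivization.mk F v₂ hv₂] i := by
    intro g hg u hu i h
    obtain ⟨hg1, hg2⟩ := (hS g).1 hg
    apply hinj g
    fin_cases i
    · rw [h]; exact hg1.symm ▸ rfl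
    · rw [h]; exact hg2.symm ▸ rfl
  -- extracting nonzero coordinates for points on the line other than ℓ₁, ℓ₂
  have hcoord : ∀ (u : Fin n → F) (hu : u ≠ 0),
      Projectivization.mk F u hu ∈ L →
      Projectivization.mk F u hu ≠ Projectivization.mk F v₁ hv₁ →
      Projectivization.mk F u hu ≠ Projectivization.mk F v₂ hv₂ →
      ∃ c₁ c₂ : F, c₁ ≠ 0 ∧ c₂ ≠ 0 ∧ c₁ • v₁ + c₂ • v₂ = u := by
    intro u hu huL h1 h2
    have := (hmemL u hu).1 huL
    rw [hPdef, Submodule.mem_span_pair] at this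
    obtain ⟨c₁, c₂, hc⟩ := this
    refine ⟨c₁, c₂, ?_, ?_, hc⟩
    · intro h0
      apply h2
      refine (Projectivization.mk_eq_mk_iff' F u v₂ hu hv₂).2 ⟨c₂, ?_⟩
      rw [← hc, h0, zero_smul, zero_add]
    · intro h0
      apply h1
      refine (Projectivization.mk_eq_mk_iff' F u v₁ hu hv₁).2 ⟨c₁, ?_⟩
      rw [← hc, h0, zero_smul, add_zero]
  refine ⟨?_, ?_, ?_, ?_⟩
  · -- orbit ℓ₁ = {ℓ₁}
    rw [horbit]
    ext z
    simp only [Set.mem_setOf_eq, Set.mem_singleton_iff]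
    constructor
    · rintro ⟨g, hg, rfl⟩; exact ((hS g).1 hg).1
    · rintro rfl; exact ⟨_, hid, ((hS _).1 hid).1⟩
  · rw [horbit]
    ext z
    simp only [Set.mem_setOf_eq, Set.mem_singleton_iff]
    constructor
    · rintro ⟨g, hg, rfl⟩; exact ((hS g).1 hg).2
    · rintro rfl; exact ⟨_, hid, ((hS _).1 hid).2⟩
  · -- points on the line
    rintro w ⟨hwL, hw12⟩
    simp only [Set.mem_insert_iff, Set.mem_singleton_iff, not_or] at hw12
    obtain ⟨hw1, hw2⟩ := hw12
    obtain ⟨u, hu, rfl⟩ : ∃ v h, Projectivization.mk F v h = w :=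
      ⟨w.rep, w.rep_nonzero, w.mk_rep⟩
    obtain ⟨c₁, c₂, hc₁, hc₂, hc⟩ := hcoord u hu hwL hw1 hw2
    rw [horbit]
    ext z
    simp only [Set.mem_setOf_eq, Set.mem_diff, Set.mem_insert_iff, Set.mem_singleton_iff, not_or]
    constructor
    · rintro ⟨g, hg, rfl⟩
      refine ⟨?_, ?_, ?_⟩
      · rw [hpm g u hu, hmemL]
        exact (hPinv g hg u).2 ((hmemL u hu).1 hwL)
      · intro h; exact hw1 (hne g hg u hu 0 h)
      · intro h; exact hw2 (hne g hg u hu 1 h)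
    · rintro ⟨hzL, hz1, hz2⟩
      obtain ⟨t, ht, rfl⟩ : ∃ v h, Projectivization.mk F v h = z :=
        ⟨z.rep, z.rep_nonzero, z.mk_rep⟩
      obtain ⟨d₁, d₂, hd₁, hd₂, hd⟩ := hcoord t ht hzL hz1 hz2
      obtain ⟨g, hg⟩ := exists_linearEquiv_of_li hli
        (li_smul_pair hli (div_ne_zero hd₁ hc₁) (div_ne_zero hd₂ hc₂))
      have gv₁ : g v₁ = (d₁ / c₁) • v₁ := by simpa using hg 0
      have gv₂ : g v₂ = (d₂ / c₂) • v₂ := by simpa using hg 1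
      have hSg : S g := (hstab g).2
        ⟨⟨Units.mk0 _ (div_ne_zero hd₁ hc₁), by simp [Units.smul_def, gv₁]⟩,
         ⟨Units.mk0 _ (div_ne_zero hd₂ hc₂), by simp [Units.smul_def, gv₂]⟩⟩
      refine ⟨g, hSg, ?_⟩
      rw [hpm g u hu]
      have hgu : g u = t := by
        rw [← hc, map_add, map_smul, map_smul, gv₁, gv₂, smul_smul, smul_smul,
          mul_div_cancel₀ _ hc₁, mul_div_cancel₀ _ hc₂, hd]
      exact (Projectivization.mk_eq_mk_iff F _ _ _ _).2 ⟨1, by simp [hgu]⟩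
  · -- points off the line
    intro w hwL
    obtain ⟨u, hu, rfl⟩ : ∃ v h, Projectivization.mk F v h = w :=
      ⟨w.rep, w.rep_nonzero, w.mk_rep⟩
    have huP : u ∉ P := fun h => hwL ((hmemL u hu).2 h)
    have hrange : Submodule.span F (Set.range ![v₁, v₂]) = P := by
      rw [hPdef]; congr 1
      ext x
      constructor
      · rintro ⟨i, rfl⟩; fin_cases i <;> simp
      · rintro (rfl | rfl)
        exacts [⟨0, rfl⟩, ⟨1, rfl⟩]
    have hliu : LinearIndependent F (Fin.snoc ![v₁, v₂] u : Fin 3 → Fin n → F) := by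
      rw [linearIndependent_fin_snoc]
      exact ⟨hli, by rwa [hrange]⟩
    rw [horbit]
    ext z
    simp only [Set.mem_setOf_eq, Set.mem_compl_iff]
    constructor
    · rintro ⟨g, hg, rfl⟩
      rw [hpm g u hu, hmemL]
      intro h
      exact huP ((hPinv g hg u).1 h)
    · intro hzL
      obtain ⟨t, ht, rfl⟩ : ∃ v h, Projectivization.mk F v h = z :=
        ⟨z.rep, z.rep_nonzero, z.mk_rep⟩
      have htP : t ∉ P := fun h => hzL ((hmemL t ht).2 h)
      have hlit : LinearIndependent F (Fin.snoc ![v₁, v₂] t : Fin 3 → Fin n → F) := by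
        rw [linearIndependent_fin_snoc]
        exact ⟨hli, by rwa [hrange]⟩
      obtain ⟨g, hg⟩ := exists_linearEquiv_of_li hliu hlit
      have gv₁ : g v₁ = v₁ := by simpa using hg 0
      have gv₂ : g v₂ = v₂ := by simpa using hg 1
      have hgu : g u = t := by simpa using hg (Fin.last 2)
      have hSg : S g := (hstab g).2 ⟨⟨1, by simp [gv₁]⟩, ⟨1, by simp [gv₂]⟩⟩
      refine ⟨g, hSg, ?_⟩
      rw [hpm g u hu]
      exact (Projectivization.mk_eq_mk_iff F _ _ _ _).2 ⟨1, by simp [hgu]⟩
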